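/- Let p ∈ ℕ, λ > 0, Σ and Σ̂ two p×p real symmetric positive semidefinite matrices, Σ_λ := Σ + λ·I_p and Σ̂_λ := Σ̂ + λ·I_p, and v ∈ ℝ^p. Then |‖Σ_λ^{1/2} v‖² − ‖Σ̂_λ^{1/2} v‖²| ≤ ‖Σ_λ^{−1/2}(Σ − Σ̂)Σ_λ^{−1/2}‖_{op} · ‖Σ_λ^{1/2} v‖². (Deterministic bound on the difference between out-of-sample and in-sample regularised prediction losses.) -/

import Mathlib

open Matrix

/-- Squared Euclidean norm on `Fin p → ℝ`. -/
noncomputable def sqnorm {p : ℕ} (v : Fin p → ℝ) : ℝ := ∑ i, (v i) ^ 2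

section
open scoped ComplexOrder
noncomputable def Matrix.PosSemidef.sqrt {n : Type*} [Fintype n] [DecidableEq n] {𝕜 : Type*}
    [RCLike 𝕜] {A : Matrix n n 𝕜} (hA : A.PosSemidef) : Matrix n n 𝕜 :=
  (hA.1.eigenvectorUnitary : Matrix n n 𝕜) * diagonal ((↑) ∘ (√·) ∘ hA.1.eigenvalues) *
    (star hA.1.eigenvectorUnitary : Matrix n n 𝕜)
end

/-- The spectral (ℓ²-operator) norm of a real matrix. -/
noncomputable def opNorm {p : ℕ} (M : Matrix (Fin p) (Fin p) ℝ) : ℝ :=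
  ‖Matrix.toEuclideanCLM (𝕜 := ℝ) M‖

open scoped ComplexOrder in
lemma Matrix.PosSemidef.sqrt_mul_self {n : Type*} [Fintype n] [DecidableEq n] {𝕜 : Type*}
    [RCLike 𝕜] {A : Matrix n n 𝕜} (hA : A.PosSemidef) : hA.sqrt * hA.sqrt = A := by
  conv_rhs => rw [hA.1.spectral_theorem, Unitary.conjStarAlgAut_apply]
  have hU : star (hA.1.eigenvectorUnitary : Matrix n n 𝕜) * (hA.1.eigenvectorUnitary : Matrix n n 𝕜) = 1 :=
    Unitary.star_mul_self_of_mem hA.1.eigenvectorUnitary.prop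
  unfold Matrix.PosSemidef.sqrt
  simp only [Matrix.mul_assoc]
  rw [← Matrix.mul_assoc (star _) _ (diagonal _ * _), hU, Matrix.one_mul, ← Matrix.mul_assoc (diagonal _),
    diagonal_mul_diagonal]
  congr 3
  ext i
  simp only [Function.comp_apply, ← RCLike.ofReal_mul, Real.mul_self_sqrt (hA.eigenvalues_nonneg i)]

open scoped ComplexOrder in
lemma Matrix.PosSemidef.posSemidef_sqrt {n : Type*} [Fintype n] [DecidableEq n] {𝕜 : Type*}
    [RCLike 𝕜] {A : Matrix n n 𝕜} (hA : A.PosSemidef) : hA.sqrt.PosSemidef := by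
  unfold Matrix.PosSemidef.sqrt
  rw [star_eq_conjTranspose]
  apply PosSemidef.mul_mul_conjTranspose_same
  refine posSemidef_diagonal_iff.mpr fun i => ?_
  simp only [Function.comp_apply]
  exact_mod_cast Real.sqrt_nonneg _

lemma sqnorm_eq_dot {p : ℕ} (v : Fin p → ℝ) : sqnorm v = v ⬝ᵥ v := by
  simp [sqnorm, dotProduct, sq]

lemma dot_mulVec_left {p : ℕ} (N : Matrix (Fin p) (Fin p) ℝ) (u x : Fin p → ℝ) :
    (N *ᵥ u) ⬝ᵥ x = u ⬝ᵥ (Nᵀ *ᵥ x) := by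
  rw [dotProduct_mulVec, vecMul_transpose]

lemma quad_bound {p : ℕ} (M : Matrix (Fin p) (Fin p) ℝ) (w : Fin p → ℝ) :
    |w ⬝ᵥ (M *ᵥ w)| ≤ opNorm M * sqnorm w := by
  set W : EuclideanSpace ℝ (Fin p) := (WithLp.equiv 2 _).symm w with hW
  have h1 : (inner ℝ W (Matrix.toEuclideanCLM (𝕜 := ℝ) M W) : ℝ) = w ⬝ᵥ (M *ᵥ w) := by
    rw [hW, WithLp.equiv_symm_apply, Matrix.toEuclideanCLM_toLp]
    simp [PiLp.inner_apply, dotProduct, Matrix.toLin'_apply, mul_comm]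
  have h2 : ‖W‖ ^ 2 = sqnorm w := by
    rw [← real_inner_self_eq_norm_sq, hW, PiLp.inner_apply]
    simp [sqnorm, sq]
  have h3 := abs_real_inner_le_norm W (Matrix.toEuclideanCLM (𝕜 := ℝ) M W)
  have h4 := (Matrix.toEuclideanCLM (𝕜 := ℝ) M).le_opNorm W
  calc |w ⬝ᵥ (M *ᵥ w)| = |(inner ℝ W (Matrix.toEuclideanCLM (𝕜 := ℝ) M W) : ℝ)| := by rw [h1]
    _ ≤ ‖W‖ * ‖Matrix.toEuclideanCLM (𝕜 := ℝ) M W‖ := h3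
    _ ≤ ‖W‖ * (‖Matrix.toEuclideanCLM (𝕜 := ℝ) M‖ * ‖W‖) := by
        exact mul_le_mul_of_nonneg_left h4 (norm_nonneg _)
    _ = opNorm M * sqnorm w := by rw [← h2]; ring_nf; rfl

lemma main_aux {p : ℕ} (A B D : Matrix (Fin p) (Fin p) ℝ) (v : Fin p → ℝ)
    (hAsymm : Aᵀ = A) (hBsymm : Bᵀ = B)
    (hD : A * A - B * B = D)
    (hAinv : A⁻¹ * A = 1) (hAinv' : A * A⁻¹ = 1) :
    |sqnorm (A *ᵥ v) - sqnorm (B *ᵥ v)| ≤ opNorm (A⁻¹ * D * A⁻¹) * sqnorm (A *ᵥ v) := by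
  have hsqA : sqnorm (A *ᵥ v) = v ⬝ᵥ ((A * A) *ᵥ v) := by
    rw [sqnorm_eq_dot, dot_mulVec_left, hAsymm, mulVec_mulVec]
  have hsqB : sqnorm (B *ᵥ v) = v ⬝ᵥ ((B * B) *ᵥ v) := by
    rw [sqnorm_eq_dot, dot_mulVec_left, hBsymm, mulVec_mulVec]
  have key : sqnorm (A *ᵥ v) - sqnorm (B *ᵥ v) = (A *ᵥ v) ⬝ᵥ ((A⁻¹ * D * A⁻¹) *ᵥ (A *ᵥ v)) := by
    have h1 : sqnorm (A *ᵥ v) - sqnorm (B *ᵥ v) = v ⬝ᵥ (D *ᵥ v) := by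
      rw [hsqA, hsqB, ← dotProduct_sub, ← sub_mulVec, hD]
    have h2 : (A *ᵥ v) ⬝ᵥ ((A⁻¹ * D * A⁻¹) *ᵥ (A *ᵥ v)) = v ⬝ᵥ (D *ᵥ v) := by
      rw [dot_mulVec_left, hAsymm, mulVec_mulVec, mulVec_mulVec]
      have hc : A * (A⁻¹ * D * A⁻¹) * A = D := by
        simp only [Matrix.mul_assoc]
        rw [hAinv, mul_one, ← Matrix.mul_assoc, hAinv', one_mul]
      rw [hc]
    rw [h1, h2]
  rw [key]
  exact quad_bound _ _

/-- deterministic bound on the difference between out-of-sample and in-sample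
regularised prediction losses. -/
theorem out_in_sample_loss_bound
    (p : ℕ) (lam : ℝ) (hlam : 0 < lam)
    (Sig Sighat : Matrix (Fin p) (Fin p) ℝ)
    (hSig : Sig.PosSemidef) (hSighat : Sighat.PosSemidef)
    (Sigl Sighatl : Matrix (Fin p) (Fin p) ℝ)
    (hSigl_def : Sigl = Sig + lam • 1) (hSighatl_def : Sighatl = Sighat + lam • 1)
    (hSigl : Sigl.PosSemidef) (hSighatl : Sighatl.PosSemidef)
    (v : Fin p → ℝ) :
    |sqnorm (hSigl.sqrt *ᵥ v) - sqnorm (hSighatl.sqrt *ᵥ v)| ≤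
      opNorm ((hSigl.sqrt)⁻¹ * (Sig - Sighat) * (hSigl.sqrt)⁻¹) * sqnorm (hSigl.sqrt *ᵥ v) := by
  have hsm : (lam • (1 : Matrix (Fin p) (Fin p) ℝ)) = diagonal (fun _ => lam) := by
    ext i j
    by_cases h : i = j <;> simp [Matrix.one_apply, h]
  have hPD : Sigl.PosDef := by
    rw [hSigl_def, hsm]
    exact Matrix.PosDef.posSemidef_add hSig (Matrix.PosDef.diagonal (fun _ => hlam))
  have hAdet : IsUnit (hSigl.sqrt).det := by
    have h : hSigl.sqrt * hSigl.sqrt = Sigl := hSigl.sqrt_mul_self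
    have h2 : (hSigl.sqrt).det * (hSigl.sqrt).det = Sigl.det := by rw [← det_mul, h]
    exact isUnit_of_mul_isUnit_left (h2 ▸ hPD.det_pos.ne'.isUnit)
  have hAsymm : (hSigl.sqrt)ᵀ = hSigl.sqrt := by
    have h := hSigl.posSemidef_sqrt.isHermitian
    simpa [Matrix.IsHermitian, conjTranspose_eq_transpose_of_trivial] using h
  have hBsymm : (hSighatl.sqrt)ᵀ = hSighatl.sqrt := by
    have h := hSighatl.posSemidef_sqrt.isHermitian
    simpa [Matrix.IsHermitian, conjTranspose_eq_transpose_of_trivial] using h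
  have hD : hSigl.sqrt * hSigl.sqrt - hSighatl.sqrt * hSighatl.sqrt = Sig - Sighat := by
    rw [hSigl.sqrt_mul_self, hSighatl.sqrt_mul_self, hSigl_def, hSighatl_def,
      add_sub_add_right_eq_sub]
  exact main_aux _ _ _ v hAsymm hBsymm hD (nonsing_inv_mul _ hAdet) (mul_nonsing_inv _ hAdet)
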